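/- Assume statements (A) and (B) both hold. Then statement (**) holds: for any family F ⊆ (ω₂ → ω₂) of injective functions with |F| ≤ ω₂, there exists an injective function h : ω₂ → ω₂ such that for any f ∈ F there exists a countable set D ⊆ ω₂ such that (i) for all α ∈ ω₂ \ D, f(α) ≠ h(α), and (ii) for all distinct α, β ∈ ω₂ \ D, f(h(α)) ≠ h(β). -/

import Mathlib

noncomputable section

abbrev Ordi : Type 1 := Ordinal.{0}

/-- The ordinal `ω₁`. -/
def w1 : Ordi := (Cardinal.aleph 1).ord

/-- The ordinal `ω₂`. -/
def w2 : Ordi := (Cardinal.aleph 2).ord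

/-- `C` is a club (closed and unbounded) subset of `κ`. -/
def IsClubIn (C : Set Ordi) (κ : Ordi) : Prop :=
  C ⊆ Set.Iio κ ∧ (∀ α < κ, ∃ β ∈ C, α ≤ β) ∧
    ∀ α, 0 < α → α < κ → (∀ β < α, ∃ γ ∈ C, β < γ ∧ γ < α) → α ∈ C

/-- `S` is a stationary subset of `κ`: it meets every club subset of `κ`. -/
def IsStationaryIn (S : Set Ordi) (κ : Ordi) : Prop :=
  S ⊆ Set.Iio κ ∧ ∀ C : Set Ordi, IsClubIn C κ → (S ∩ C).Nonempty

/-- `S²₁`: the set of ordinals below `ω₂` of cofinality `ω₁`. -/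
def S21 : Set Ordi := {α | α < w2 ∧ Ordinal.cof α = Cardinal.aleph 1}

/-- Statement (A): any family of at most `ω₂`-many club subsets of `ω₁` can be
diagonalized. -/
def StatementA : Prop :=
  ∀ 𝒞 : Set (Set Ordi), (∀ C ∈ 𝒞, IsClubIn C w1) →
    Cardinal.mk ↥𝒞 ≤ Cardinal.aleph 2 →
    ∃ E : Set Ordi, IsClubIn E w1 ∧ ∀ C ∈ 𝒞, (E \ C).Countable

/-- Statement (B): there is a sequence `⟨π_β : ω₁ ≤ β < ω₂⟩` of bijections
`π_β : β → ω₁` such that for every `g : ω₁ → ω₁` there are an injective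
`h : ω₂ → ω₂` and a stationary set `I ⊆ S²₁` of ordinals closed under `h`
with the stated oscillation properties. -/
def StatementB : Prop :=
  ∃ pi : Ordi → Ordi → Ordi,
    (∀ β, w1 ≤ β → β < w2 → Set.BijOn (pi β) (Set.Iio β) (Set.Iio w1)) ∧
    ∀ g : Ordi → Ordi, (∀ i < w1, g i < w1) →
      ∃ h : Ordi → Ordi, Set.InjOn h (Set.Iio w2) ∧ (∀ α < w2, h α < w2) ∧
        ∃ I : Set Ordi, I ⊆ S21 ∧ IsStationaryIn I w2 ∧
          (∀ β ∈ I, ∀ α < β, h α < β) ∧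
          ∀ β ∈ I, ∃ D : Set Ordi, D ⊆ Set.Iio β ∧ D.Countable ∧
            (∀ α < β, α ∉ D →
              g (min (pi β α) (pi β (h α))) < max (pi β α) (pi β (h α))) ∧
            (∀ α < β, α ∉ D → ∀ γ < β, γ ∉ D → α ≠ γ →
              g (min (pi β (h α)) (pi β (h γ))) < max (pi β (h α)) (pi β (h γ)))

/-- Statement (**): for any family `F` of at most `ω₂`-many injective functions
from `ω₂` to `ω₂` there is an injective `h : ω₂ → ω₂` such that for every
`f ∈ F` there is a countable `D ⊆ ω₂` with `f(α) ≠ h(α)` off `D` and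
`f(h(α)) ≠ h(β)` for distinct `α, β` off `D`. -/
def StatementSS : Prop :=
  ∀ F : Set (Ordi → Ordi),
    (∀ f ∈ F, Set.InjOn f (Set.Iio w2) ∧ ∀ α < w2, f α < w2) →
    Cardinal.mk ↥F ≤ Cardinal.aleph 2 →
    ∃ h : Ordi → Ordi, Set.InjOn h (Set.Iio w2) ∧ (∀ α < w2, h α < w2) ∧
      ∀ f ∈ F, ∃ D : Set Ordi, D ⊆ Set.Iio w2 ∧ D.Countable ∧
        (∀ α < w2, α ∉ D → f α ≠ h α) ∧
        (∀ α < w2, α ∉ D → ∀ β < w2, β ∉ D → α ≠ β → f (h α) ≠ h β)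

section Auxiliary

open Cardinal Set Ordinal

attribute [local instance] Classical.propDecidable

lemma w1_isLimit : Order.IsSuccLimit w1 := Cardinal.isSuccLimit_ord (Cardinal.aleph0_le_aleph 1)
lemma w2_isLimit : Order.IsSuccLimit w2 := Cardinal.isSuccLimit_ord (Cardinal.aleph0_le_aleph 2)
lemma cof_w1 : w1.cof = Cardinal.aleph 1 := Cardinal.isRegular_aleph_one.cof_eq
lemma regular_a2 : (Cardinal.aleph 2).IsRegular := by
  rw [← Ordinal.succ_one]; exact Cardinal.isRegular_aleph_succ 1
lemma cof_w2 : w2.cof = Cardinal.aleph 2 := regular_a2.cof_eq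

lemma countable_Iio (e : Ordi) (he : e < w1) : (Set.Iio e).Countable := by
  rw [Cardinal.countable_iff_lt_aleph_one, Ordinal.mk_Iio_ordinal]
  have h1 : e.card < Cardinal.aleph 1 := (Cardinal.lt_ord).1 he
  calc Cardinal.lift.{1} e.card < Cardinal.lift.{1} (Cardinal.aleph 1) := Cardinal.lift_lt.2 h1
    _ = Cardinal.aleph 1 := by rw [Cardinal.lift_aleph]; norm_num

/-- Closure points of `g` below `w1` form a club in `w1`. -/
lemma club_closure (g : Ordi → Ordi) (hg : ∀ ξ < w1, g ξ < w1) :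
    IsClubIn {δ | δ < w1 ∧ ∀ ξ < δ, g ξ < δ} w1 := by
  refine ⟨fun δ hδ => hδ.1, ?_, ?_⟩
  · intro α hα
    let F : ℕ → Ordi := fun n => Nat.rec α
      (fun _ δ => max (δ + 1) (Ordinal.bsup δ (fun ξ _ => g ξ + 1))) n
    have hF : ∀ n, F n < w1 := by
      intro n
      induction n with
      | zero => exact hα
      | succ n ih =>
        refine max_lt (w1_isLimit.succ_lt ih) ?_
        refine Ordinal.bsup_lt_ord ?_ (fun ξ hξ => w1_isLimit.succ_lt (hg ξ (hξ.trans ih)))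
        rw [cof_w1]
        exact (Cardinal.lt_ord).1 ih
    have hbdd : BddAbove (Set.range F) := ⟨w1, by rintro x ⟨n, rfl⟩; exact (hF n).le⟩
    refine ⟨iSup F, ⟨?_, ?_⟩, le_ciSup hbdd 0⟩
    · exact Ordinal.iSup_lt_ord
        (by rw [cof_w1, Cardinal.mk_denumerable]; exact Cardinal.aleph0_lt_aleph_one) hF
    · intro ξ hξ
      obtain ⟨n, hn⟩ := (lt_ciSup_iff hbdd).1 hξ
      calc g ξ < g ξ + 1 := Order.lt_succ _
        _ ≤ Ordinal.bsup (F n) (fun ζ _ => g ζ + 1) := Ordinal.le_bsup _ ξ hn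
        _ ≤ F (n + 1) := le_max_right _ _
        _ ≤ iSup F := le_ciSup hbdd (n + 1)
  · rintro α _ hα hacc
    refine ⟨hα, fun ξ hξ => ?_⟩
    obtain ⟨γ, hγC, hξγ, hγα⟩ := hacc ξ hξ
    exact (hγC.2 ξ hξγ).trans hγα

/-- From an uncountable `A ⊆ ω₂` one can extract an uncountable subset that is,
together with the values of `q` on it, bounded below `ω₂`. -/
lemma uncountable_bounded (A : Set Ordi) (q : Ordi → Ordi) (hA : ¬ A.Countable)
    (hbd : ∀ α ∈ A, α < w2 ∧ q α < w2) :
    ∃ σ < w2, ∃ T ⊆ A, ¬ T.Countable ∧ ∀ α ∈ T, α < σ ∧ q α < σ := by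
  have h1 : (Cardinal.aleph 1 : Cardinal.{1}) ≤ Cardinal.mk A := by
    rw [Cardinal.countable_iff_lt_aleph_one] at hA
    exact le_of_not_gt hA
  set W : Type := (w1 : Ordinal.{0}).ToType with hW
  have hmkW : Cardinal.mk W = Cardinal.aleph 1 := by
    rw [hW, Cardinal.mk_toType, w1, Cardinal.card_ord]
  have hmkUW : Cardinal.mk (ULift.{1} W) = (Cardinal.aleph 1 : Cardinal.{1}) := by
    rw [Cardinal.mk_uLift, hmkW, Cardinal.lift_aleph]; norm_num
  rw [← hmkUW, Cardinal.le_def] at h1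
  obtain ⟨j⟩ := h1
  set f : W → Ordi := fun w => max ((j ⟨w⟩ : Ordi)) (q (j ⟨w⟩)) + 1 with hf
  have hfw : ∀ w : W, f w < w2 := by
    intro w
    have := hbd (j ⟨w⟩) (j ⟨w⟩).2
    exact w2_isLimit.succ_lt (max_lt this.1 this.2)
  have hbdd : BddAbove (Set.range f) := ⟨w2, by rintro x ⟨w, rfl⟩; exact (hfw w).le⟩
  refine ⟨iSup f, Ordinal.iSup_lt_ord
      (by rw [cof_w2, hmkW]; exact Cardinal.aleph_lt_aleph.2 (by norm_num)) hfw,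
    Set.range (fun w : W => (j ⟨w⟩ : Ordi)), ?_, ?_, ?_⟩
  · rintro x ⟨w, rfl⟩; exact (j ⟨w⟩).2
  · intro hc
    have hc' : Cardinal.mk (Set.range (fun w : W => (j ⟨w⟩ : Ordi))) ≤ Cardinal.aleph0 := by
      rwa [← Cardinal.le_aleph0_iff_set_countable] at hc
    have hle : Cardinal.mk (ULift.{1} W) ≤
        Cardinal.mk (Set.range (fun w : W => (j ⟨w⟩ : Ordi))) := by
      refine Cardinal.mk_le_of_injective (f := fun u : ULift.{1} W =>
        (⟨(j ⟨u.down⟩ : Ordi), ⟨u.down, rfl⟩⟩ :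
          Set.range (fun w : W => (j ⟨w⟩ : Ordi)))) ?_
      intro a b hab
      have h2 : (j ⟨a.down⟩ : Ordi) = (j ⟨b.down⟩ : Ordi) := by
        simpa using congrArg Subtype.val hab
      have := j.injective (Subtype.ext h2)
      cases a; cases b; cases congrArg ULift.down this; rfl
    rw [hmkUW] at hle
    exact absurd (hle.trans hc') (not_le.2 Cardinal.aleph0_lt_aleph_one)
  · rintro x ⟨w, rfl⟩
    exact ⟨lt_of_le_of_lt (le_max_left _ _) ((Order.lt_succ _).trans_le (le_ciSup hbdd w)),
      lt_of_le_of_lt (le_max_right _ _) ((Order.lt_succ _).trans_le (le_ciSup hbdd w))⟩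

lemma club_Ioi (σ : Ordi) (hσ : σ < w2) : IsClubIn (Set.Ioi σ ∩ Set.Iio w2) w2 := by
  refine ⟨fun x hx => hx.2, ?_, ?_⟩
  · intro α hα
    refine ⟨max (σ + 1) α, ⟨?_, ?_⟩, le_max_right _ _⟩
    · exact lt_of_lt_of_le (Order.lt_succ σ) (le_max_left _ _)
    · exact max_lt (w2_isLimit.succ_lt hσ) hα
  · intro α h0 hα hacc
    obtain ⟨γ, hγ, _, hγα⟩ := hacc 0 h0
    exact ⟨hγ.1.trans hγα, hα⟩

/-- Partial inverse of `pi β`. -/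
def ivF (pi : Ordi → Ordi → Ordi) (β ξ : Ordi) : Ordi :=
  if h : ∃ α, α < β ∧ pi β α = ξ then h.choose else 0

lemma ivF_eq (pi : Ordi → Ordi → Ordi) {β : Ordi} (hinj : Set.InjOn (pi β) (Set.Iio β))
    {α : Ordi} (hα : α < β) : ivF pi β (pi β α) = α := by
  have hex : ∃ α', α' < β ∧ pi β α' = pi β α := ⟨α, hα, rfl⟩
  unfold ivF
  rw [dif_pos hex]
  exact hinj hex.choose_spec.1 hα hex.choose_spec.2

/-- Forward transfer of `f` through `pi β`, clamped into `ω₁`. -/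
def tA (pi : Ordi → Ordi → Ordi) (f : Ordi → Ordi) (β ξ : Ordi) : Ordi :=
  if pi β (f (ivF pi β ξ)) < w1 then pi β (f (ivF pi β ξ)) else 0

/-- Backward transfer of `f` through `pi β`, clamped into `ω₁`. -/
def tB (pi : Ordi → Ordi → Ordi) (f : Ordi → Ordi) (β ξ : Ordi) : Ordi :=
  if h : ∃ α, α < β ∧ f α = ivF pi β ξ ∧ pi β α < w1 then pi β h.choose else 0

def tG (pi : Ordi → Ordi → Ordi) (f : Ordi → Ordi) (β ξ : Ordi) : Ordi :=
  max (tA pi f β ξ) (tB pi f β ξ)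

lemma tG_lt_w1 (pi : Ordi → Ordi → Ordi) (f : Ordi → Ordi) (β ξ : Ordi) :
    tG pi f β ξ < w1 := by
  have h0 : (0 : Ordi) < w1 := w1_isLimit.pos
  refine max_lt ?_ ?_
  · unfold tA; split_ifs with h
    · exact h
    · exact h0
  · unfold tB; split_ifs with h
    · exact h.choose_spec.2.2
    · exact h0

lemma tA_val (pi : Ordi → Ordi → Ordi) {β : Ordi} (hinj : Set.InjOn (pi β) (Set.Iio β))
    (f : Ordi → Ordi) {α : Ordi} (hα : α < β) (hv : pi β (f α) < w1) :
    tA pi f β (pi β α) = pi β (f α) := by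
  unfold tA
  rw [ivF_eq pi hinj hα, if_pos hv]

lemma tB_val (pi : Ordi → Ordi → Ordi) (f : Ordi → Ordi) {β δ α' : Ordi}
    (hinj : Set.InjOn (pi β) (Set.Iio β)) (finj : Set.InjOn f (Set.Iio w2)) (hβ2 : β < w2)
    (hδ : δ < β) (hα' : α' < β) (hfα' : f α' = δ) (hw : pi β α' < w1) :
    tB pi f β (pi β δ) = pi β α' := by
  have hiv : ivF pi β (pi β δ) = δ := ivF_eq pi hinj hδ
  have hex : ∃ α, α < β ∧ f α = ivF pi β (pi β δ) ∧ pi β α < w1 :=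
    ⟨α', hα', by rw [hiv]; exact hfα', hw⟩
  unfold tB
  rw [dif_pos hex]
  obtain ⟨h1, h2, _⟩ := hex.choose_spec
  have h2' : f hex.choose = f α' := (h2.trans hiv).trans hfα'.symm
  have h3 : hex.choose = α' := finj (h1.trans hβ2) (hα'.trans hβ2) h2'
  rw [h3]

end Auxiliary

/-- Statements (A) and (B) together imply statement (**). -/
theorem statementA_and_B_implies_starstar (hA : StatementA) (hB : StatementB) :
    StatementSS := by
  classical
  obtain ⟨pi, hpi, hBmain⟩ := hB
  intro F hF hFcard
  -- the family of clubs
  set 𝒞 : Set (Set Ordi) :=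
    Set.range (fun pr : ↥F × ↥(Set.Iio w2) =>
      {δ : Ordi | δ < w1 ∧ ∀ ξ < δ, tG pi (pr.1 : Ordi → Ordi) (pr.2 : Ordi) ξ < δ}) with h𝒞
  have h𝒞club : ∀ C ∈ 𝒞, IsClubIn C w1 := by
    rintro C ⟨pr, rfl⟩
    exact club_closure _ (fun ξ _ => tG_lt_w1 pi _ _ ξ)
  have h𝒞card : Cardinal.mk ↥𝒞 ≤ Cardinal.aleph 2 := by
    refine le_trans Cardinal.mk_range_le ?_
    have hIio : Cardinal.mk ↥(Set.Iio w2) ≤ Cardinal.aleph 2 := by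
      rw [Ordinal.mk_Iio_ordinal, w2, Cardinal.card_ord, Cardinal.lift_aleph]
      simp
    calc Cardinal.mk (↥F × ↥(Set.Iio w2))
        = Cardinal.mk ↥F * Cardinal.mk ↥(Set.Iio w2) := by
          rw [Cardinal.mk_prod, Cardinal.lift_id, Cardinal.lift_id]
      _ ≤ Cardinal.aleph 2 * Cardinal.aleph 2 := mul_le_mul' hFcard hIio
      _ = Cardinal.aleph 2 := Cardinal.mul_eq_self (Cardinal.aleph0_le_aleph 2)
  obtain ⟨E, hEclub, hEdiag⟩ := hA 𝒞 h𝒞club h𝒞card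
  set g : Ordi → Ordi := fun ξ => sInf {e | e ∈ E ∧ ξ < e} with hgdef
  have hgE : ∀ ξ < w1, g ξ ∈ E ∧ ξ < g ξ := by
    intro ξ hξ
    have hne : {e | e ∈ E ∧ ξ < e}.Nonempty := by
      obtain ⟨e, heE, hle⟩ := hEclub.2.1 (ξ + 1) (w1_isLimit.succ_lt hξ)
      exact ⟨e, heE, lt_of_lt_of_le (Order.lt_succ ξ) hle⟩
    exact csInf_mem hne
  have hg : ∀ i < w1, g i < w1 := fun i hi => hEclub.1 (hgE i hi).1
  obtain ⟨h, hinj, hlt, I, hIS, hIstat, hIcl, hosc⟩ := hBmain g hg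
  refine ⟨h, hinj, hlt, ?_⟩
  intro f hf
  obtain ⟨finj, fbd⟩ := hF f hf
  -- the two exceptional sets
  set Q : Set Ordi := {α | α < w2 ∧ f α = h α} with hQdef
  set P : Set Ordi := {α | α < w2 ∧ ∃ γ, γ < w2 ∧ γ ≠ α ∧ f (h α) = h γ} with hPdef
  set p : Ordi → Ordi := fun α =>
    if hx : ∃ γ, γ < w2 ∧ γ ≠ α ∧ f (h α) = h γ then hx.choose else 0 with hpdef
  have hp_spec : ∀ α, (∃ γ, γ < w2 ∧ γ ≠ α ∧ f (h α) = h γ) →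
      p α < w2 ∧ p α ≠ α ∧ f (h α) = h (p α) := by
    intro α hx
    simp only [hpdef, dif_pos hx]
    exact hx.choose_spec
  -- countability of the Bad sets
  have hBad : ∀ β < w2, {ξ | ξ < w1 ∧ g ξ ∉ {δ : Ordi | δ < w1 ∧ ∀ ζ < δ, tG pi f β ζ < δ}}.Countable := by
    intro β hβ2
    have hdiff : (E \ {δ : Ordi | δ < w1 ∧ ∀ ζ < δ, tG pi f β ζ < δ}).Countable :=
      hEdiag _ ⟨(⟨f, hf⟩, ⟨β, hβ2⟩), rfl⟩
    have hsub : {ξ | ξ < w1 ∧ g ξ ∉ {δ : Ordi | δ < w1 ∧ ∀ ζ < δ, tG pi f β ζ < δ}} ⊆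
        ⋃ e ∈ E \ {δ : Ordi | δ < w1 ∧ ∀ ζ < δ, tG pi f β ζ < δ}, Set.Iio e := by
      intro ξ hξ
      exact Set.mem_biUnion ⟨(hgE ξ hξ.1).1, hξ.2⟩ (hgE ξ hξ.1).2
    exact Set.Countable.mono hsub
      (hdiff.biUnion (fun e he => countable_Iio e (hEclub.1 he.1)))
  -- key: Q is countable
  have hQc : Q.Countable := by
    by_contra hQc
    obtain ⟨σ, hσ2, T, hTsub, hTc, hTbd⟩ :=
      uncountable_bounded Q id hQc (fun α hα => ⟨hα.1, hα.1⟩)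
    obtain ⟨β, hβI, hβmem⟩ := hIstat.2 _ (club_Ioi σ hσ2)
    have hβ2 : β < w2 := hβmem.2
    have hw1β : w1 ≤ β := by
      rw [w1, Cardinal.ord_le, ← (hIS hβI).2]
      exact Ordinal.cof_le_card β
    have hbij := hpi β hw1β hβ2
    obtain ⟨D, hDsub, hDc, hB1, hB2⟩ := hosc β hβI
    set Cl : Set Ordi := {δ : Ordi | δ < w1 ∧ ∀ ζ < δ, tG pi f β ζ < δ} with hCl
    have hBadc := hBad β hβ2
    have hsubβ : ∀ α ∈ T, α < β := fun α hα => ((hTbd α hα).1).trans hβmem.1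
    set s2 : Set Ordi := T ∩ (fun α => pi β α) ⁻¹' {ξ | ξ < w1 ∧ g ξ ∉ Cl} with hs2
    set s3 : Set Ordi := T ∩ (fun α => pi β (h α)) ⁻¹' {ξ | ξ < w1 ∧ g ξ ∉ Cl} with hs3
    have hs2c : s2.Countable := by
      refine Set.countable_of_injective_of_countable_image ?_
        (Set.Countable.mono (Set.image_subset_iff.2 (fun x hx => hx.2)) hBadc)
      intro x hx y hy hxy
      exact hbij.injOn (hsubβ x hx.1) (hsubβ y hy.1) hxy
    have hs3c : s3.Countable := by
      refine Set.countable_of_injective_of_countable_image ?_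
        (Set.Countable.mono (Set.image_subset_iff.2 (fun x hx => hx.2)) hBadc)
      intro x hx y hy hxy
      have hhx : h x < β := hIcl β hβI x (hsubβ x hx.1)
      have hhy : h y < β := hIcl β hβI y (hsubβ y hy.1)
      have : h x = h y := hbij.injOn hhx hhy hxy
      exact hinj ((hsubβ x hx.1).trans hβ2) ((hsubβ y hy.1).trans hβ2) this
    have hTne : (T \ (D ∪ s2 ∪ s3)).Nonempty := by
      rw [Set.nonempty_iff_ne_empty]
      intro hemp
      refine hTc (Set.Countable.mono ?_ ((hDc.union hs2c).union hs3c))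
      intro x hx
      by_contra hxn
      exact (Set.eq_empty_iff_forall_notMem.1 hemp x) ⟨hx, hxn⟩
    obtain ⟨α, hαT, hαn⟩ := hTne
    simp only [Set.mem_union, not_or] at hαn
    obtain ⟨⟨hαD, hαs2⟩, hαs3⟩ := hαn
    have hαβ : α < β := hsubβ α hαT
    have hαQ : α ∈ Q := hTsub hαT
    have hα2 : α < w2 := hαQ.1
    have hfαhα : f α = h α := hαQ.2
    have hhαβ : h α < β := hIcl β hβI α hαβ
    have hx1 : pi β α < w1 := hbij.mapsTo hαβ
    have hy1 : pi β (h α) < w1 := hbij.mapsTo hhαβ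
    have hosc1 := hB1 α hαβ hαD
    rcases lt_trichotomy (pi β α) (pi β (h α)) with hltc | heqc | hgtc
    · rw [min_eq_left hltc.le, max_eq_right hltc.le] at hosc1
      have hgCl : g (pi β α) ∈ Cl := by
        by_contra hc
        exact hαs2 ⟨hαT, hx1, hc⟩
      have hkey : tG pi f β (pi β α) < g (pi β α) :=
        hgCl.2 _ (hgE _ hx1).2
      have haval : tA pi f β (pi β α) = pi β (h α) := by
        have := tA_val pi hbij.injOn f hαβ (by rw [hfαhα]; exact hy1)
        rwa [hfαhα] at this
      have : pi β (h α) < g (pi β α) :=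
        lt_of_le_of_lt (haval ▸ le_max_left _ (tB pi f β (pi β α))) hkey
      exact absurd hosc1 (not_lt.2 this.le)
    · rw [← heqc, min_self, max_self] at hosc1
      exact absurd hosc1 (not_lt.2 (hgE _ hx1).2.le)
    · rw [min_eq_right hgtc.le, max_eq_left hgtc.le] at hosc1
      have hgCl : g (pi β (h α)) ∈ Cl := by
        by_contra hc
        exact hαs3 ⟨hαT, hy1, hc⟩
      have hkey : tG pi f β (pi β (h α)) < g (pi β (h α)) :=
        hgCl.2 _ (hgE _ hy1).2
      have hbval : tB pi f β (pi β (h α)) = pi β α :=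
        tB_val pi f hbij.injOn finj hβ2 hhαβ hαβ hfαhα hx1
      have : pi β α < g (pi β (h α)) :=
        lt_of_le_of_lt (hbval ▸ le_max_right (tA pi f β (pi β (h α))) _) hkey
      exact absurd hosc1 (not_lt.2 this.le)
  -- key: P is countable
  have hPc : P.Countable := by
    by_contra hPc
    obtain ⟨σ, hσ2, T, hTsub, hTc, hTbd⟩ :=
      uncountable_bounded P p hPc (fun α hα => ⟨hα.1, (hp_spec α hα.2).1⟩)
    obtain ⟨β, hβI, hβmem⟩ := hIstat.2 _ (club_Ioi σ hσ2)
    have hβ2 : β < w2 := hβmem.2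
    have hw1β : w1 ≤ β := by
      rw [w1, Cardinal.ord_le, ← (hIS hβI).2]
      exact Ordinal.cof_le_card β
    have hbij := hpi β hw1β hβ2
    obtain ⟨D, hDsub, hDc, hB1, hB2⟩ := hosc β hβI
    set Cl : Set Ordi := {δ : Ordi | δ < w1 ∧ ∀ ζ < δ, tG pi f β ζ < δ} with hCl
    have hBadc := hBad β hβ2
    have hsubβ : ∀ α ∈ T, α < β := fun α hα => ((hTbd α hα).1).trans hβmem.1
    have hpβ : ∀ α ∈ T, p α < β := fun α hα => ((hTbd α hα).2).trans hβmem.1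
    have hspec : ∀ α ∈ T, p α < w2 ∧ p α ≠ α ∧ f (h α) = h (p α) :=
      fun α hα => hp_spec α (hTsub hα).2
    have hpinj : Set.InjOn p T := by
      intro x hx y hy hxy
      have hx2 : x < w2 := (hTsub hx).1
      have hy2 : y < w2 := (hTsub hy).1
      have h1 : f (h x) = f (h y) := by
        rw [(hspec x hx).2.2, (hspec y hy).2.2, hxy]
      have h2 : h x = h y := finj (hlt x hx2) (hlt y hy2) h1
      exact hinj hx2 hy2 h2
    set s1 : Set Ordi := T ∩ p ⁻¹' D with hs1
    set s3 : Set Ordi := T ∩ (fun α => pi β (h α)) ⁻¹' {ξ | ξ < w1 ∧ g ξ ∉ Cl} with hs3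
    set s4 : Set Ordi := T ∩ (fun α => pi β (h (p α))) ⁻¹' {ξ | ξ < w1 ∧ g ξ ∉ Cl} with hs4
    have hs1c : s1.Countable := by
      refine Set.countable_of_injective_of_countable_image
        (Set.InjOn.mono Set.inter_subset_left hpinj)
        (Set.Countable.mono (Set.image_subset_iff.2 (fun x hx => hx.2)) hDc)
    have hs3c : s3.Countable := by
      refine Set.countable_of_injective_of_countable_image ?_
        (Set.Countable.mono (Set.image_subset_iff.2 (fun x hx => hx.2)) hBadc)
      intro x hx y hy hxy
      have hhx : h x < β := hIcl β hβI x (hsubβ x hx.1)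
      have hhy : h y < β := hIcl β hβI y (hsubβ y hy.1)
      have : h x = h y := hbij.injOn hhx hhy hxy
      exact hinj ((hsubβ x hx.1).trans hβ2) ((hsubβ y hy.1).trans hβ2) this
    have hs4c : s4.Countable := by
      refine Set.countable_of_injective_of_countable_image ?_
        (Set.Countable.mono (Set.image_subset_iff.2 (fun x hx => hx.2)) hBadc)
      intro x hx y hy hxy
      have hhx : h (p x) < β := hIcl β hβI (p x) (hpβ x hx.1)
      have hhy : h (p y) < β := hIcl β hβI (p y) (hpβ y hy.1)
      have h2 : h (p x) = h (p y) := hbij.injOn hhx hhy hxy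
      have h3 : p x = p y :=
        hinj ((hpβ x hx.1).trans hβ2) ((hpβ y hy.1).trans hβ2) h2
      exact hpinj hx.1 hy.1 h3
    have hTne : (T \ (D ∪ s1 ∪ s3 ∪ s4)).Nonempty := by
      rw [Set.nonempty_iff_ne_empty]
      intro hemp
      refine hTc (Set.Countable.mono ?_ (((hDc.union hs1c).union hs3c).union hs4c))
      intro x hx
      by_contra hxn
      exact (Set.eq_empty_iff_forall_notMem.1 hemp x) ⟨hx, hxn⟩
    obtain ⟨α, hαT, hαn⟩ := hTne
    simp only [Set.mem_union, not_or] at hαn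
    obtain ⟨⟨⟨hαD, hαs1⟩, hαs3⟩, hαs4⟩ := hαn
    have hαβ : α < β := hsubβ α hαT
    have hα2 : α < w2 := (hTsub hαT).1
    obtain ⟨hpα2, hpαne, hpαeq⟩ := hspec α hαT
    have hγβ : p α < β := hpβ α hαT
    have hγD : p α ∉ D := fun hc => hαs1 ⟨hαT, hc⟩
    have hhαβ : h α < β := hIcl β hβI α hαβ
    have hhγβ : h (p α) < β := hIcl β hβI (p α) hγβ
    have hu1 : pi β (h α) < w1 := hbij.mapsTo hhαβ
    have hv1 : pi β (h (p α)) < w1 := hbij.mapsTo hhγβ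
    have hosc2 := hB2 α hαβ hαD (p α) hγβ hγD (Ne.symm hpαne)
    have huv : pi β (h α) ≠ pi β (h (p α)) := by
      intro he
      have h2 : h α = h (p α) := hbij.injOn hhαβ hhγβ he
      exact hpαne (hinj hpα2 hα2 h2.symm)
    rcases lt_trichotomy (pi β (h α)) (pi β (h (p α))) with hltc | heqc | hgtc
    · rw [min_eq_left hltc.le, max_eq_right hltc.le] at hosc2
      have hgCl : g (pi β (h α)) ∈ Cl := by
        by_contra hc
        exact hαs3 ⟨hαT, hu1, hc⟩
      have hkey : tG pi f β (pi β (h α)) < g (pi β (h α)) :=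
        hgCl.2 _ (hgE _ hu1).2
      have haval : tA pi f β (pi β (h α)) = pi β (h (p α)) := by
        have := tA_val pi hbij.injOn f hhαβ (by rw [hpαeq]; exact hv1)
        rwa [hpαeq] at this
      have : pi β (h (p α)) < g (pi β (h α)) :=
        lt_of_le_of_lt (haval ▸ le_max_left _ (tB pi f β (pi β (h α)))) hkey
      exact absurd hosc2 (not_lt.2 this.le)
    · exact huv heqc
    · rw [min_eq_right hgtc.le, max_eq_left hgtc.le] at hosc2
      have hgCl : g (pi β (h (p α))) ∈ Cl := by
        by_contra hc
        exact hαs4 ⟨hαT, hv1, hc⟩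
      have hkey : tG pi f β (pi β (h (p α))) < g (pi β (h (p α))) :=
        hgCl.2 _ (hgE _ hv1).2
      have hbval : tB pi f β (pi β (h (p α))) = pi β (h α) :=
        tB_val pi f hbij.injOn finj hβ2 hhγβ hhαβ hpαeq hu1
      have : pi β (h α) < g (pi β (h (p α))) :=
        lt_of_le_of_lt (hbval ▸ le_max_right (tA pi f β (pi β (h (p α)))) _) hkey
      exact absurd hosc2 (not_lt.2 this.le)
  -- conclusion
  refine ⟨Q ∪ P, ?_, hQc.union hPc, ?_, ?_⟩
  · rintro x (hx | hx)
    · exact hx.1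
    · exact hx.1
  · intro α hα2 hαD heq
    exact hαD (Or.inl ⟨hα2, heq⟩)
  · intro α hα2 hαD γ hγ2 hγD hne heq
    exact hαD (Or.inr ⟨hα2, γ, hγ2, Ne.symm hne, heq⟩)

end
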